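/- With Z symmetric positive definite, Γ and Λ complementary selection matrices, and W = Γᵀ(ΓZΓᵀ)⁻¹Γ, one has (ΛZ⁻¹Λᵀ)(Λ(Z − ZWZ)Λᵀ) = I, i.e., Λ(Z − ZWZ)Λᵀ is the inverse of ΛZ⁻¹Λᵀ. -/

import Mathlib

open Matrix

theorem selection_product_identity
    (m p q : ℕ) (hm : 0 < m)
    (Γ : Matrix (Fin p) (Fin m) ℝ) (Λ : Matrix (Fin q) (Fin m) ℝ)
    (hΓΓ : Γ * Γᵀ = 1) (hΛΛ : Λ * Λᵀ = 1)
    (hcompl : Γᵀ * Γ + Λᵀ * Λ = 1) (hΛΓ : Λ * Γᵀ = 0)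
    (Z : Matrix (Fin m) (Fin m) ℝ) (hZ : Z.PosDef)
    (W : Matrix (Fin m) (Fin m) ℝ) (hW : W = Γᵀ * (Γ * Z * Γᵀ)⁻¹ * Γ) :
    (Λ * Z⁻¹ * Λᵀ) * (Λ * (Z - Z * W * Z) * Λᵀ) = 1 := by
  -- A := Γ * Z * Γᵀ is positive definite
  have hA : (Γ * Z * Γᵀ).PosDef := by
    refine PosDef.of_dotProduct_mulVec_pos ?_ ?_
    · have hZh : Zᴴ = Z := hZ.1
      show (Γ * Z * Γᵀ)ᴴ = Γ * Z * Γᵀ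
      simp only [conjTranspose_mul, hZh]
      simp [Matrix.mul_assoc]
    · intro x hx
      have hx' : Γᵀ *ᵥ x ≠ 0 := by
        intro h
        apply hx
        have hxx : Γ *ᵥ (Γᵀ *ᵥ x) = x := by
          rw [mulVec_mulVec, hΓΓ, one_mulVec]
        rw [h, mulVec_zero] at hxx
        exact hxx.symm
      have hpos := hZ.dotProduct_mulVec_pos hx'
      convert hpos using 1
      have : star x = x := by simp
      rw [this, show star (Γᵀ *ᵥ x) = Γᵀ *ᵥ x by simp]
      rw [← mulVec_mulVec, ← mulVec_mulVec, dotProduct_mulVec,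
        ← mulVec_transpose]
  have hAinv : (Γ * Z * Γᵀ) * (Γ * Z * Γᵀ)⁻¹ = 1 :=
    mul_nonsing_inv _ ((isUnit_iff_isUnit_det _).1 hA.isUnit)
  have hZinv : Z⁻¹ * Z = 1 :=
    nonsing_inv_mul _ ((isUnit_iff_isUnit_det _).1 hZ.isUnit)
  -- Γ * (Z - Z*W*Z) = 0
  have hGS : Γ * (Z - Z * W * Z) = 0 := by
    rw [hW, Matrix.mul_sub]
    have : Γ * (Z * (Γᵀ * (Γ * Z * Γᵀ)⁻¹ * Γ) * Z)
        = (Γ * Z * Γᵀ) * (Γ * Z * Γᵀ)⁻¹ * (Γ * Z) := by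
      simp only [Matrix.mul_assoc]
    rw [this, hAinv, Matrix.one_mul]
    simp
  -- Z⁻¹ * (Z - Z*W*Z) = 1 - W*Z
  have hZS : Z⁻¹ * (Z - Z * W * Z) = 1 - W * Z := by
    rw [Matrix.mul_sub]
    have : Z⁻¹ * (Z * W * Z) = (Z⁻¹ * Z) * (W * Z) := by
      simp only [Matrix.mul_assoc]
    rw [this, hZinv, Matrix.one_mul]
  have hΛΛ' : Λᵀ * Λ = 1 - Γᵀ * Γ := by
    rw [← hcompl]; abel
  generalize hSdef : Z - Z * W * Z = S at hGS hZS ⊢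
  calc (Λ * Z⁻¹ * Λᵀ) * (Λ * S * Λᵀ)
      = Λ * Z⁻¹ * (Λᵀ * Λ) * S * Λᵀ := by simp only [Matrix.mul_assoc]
    _ = Λ * (Z⁻¹ * S) * Λᵀ - Λ * Z⁻¹ * Γᵀ * (Γ * S) * Λᵀ := by
        rw [hΛΛ']
        simp only [Matrix.sub_mul, Matrix.mul_one, Matrix.mul_assoc]
        simp only [Matrix.mul_sub, Matrix.one_mul]
    _ = Λ * (1 - W * Z) * Λᵀ := by rw [hZS, hGS]; simp [Matrix.mul_assoc]
    _ = 1 := by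
        rw [Matrix.mul_sub, Matrix.sub_mul, Matrix.mul_one, hΛΛ]
        have : Λ * (W * Z) * Λᵀ = (Λ * Γᵀ) * ((Γ * Z * Γᵀ)⁻¹ * Γ * Z * Λᵀ) := by
          rw [hW]; simp only [Matrix.mul_assoc]
        rw [this, hΛΓ, Matrix.zero_mul, sub_zero]
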